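/- arXiv:2504.04349 — 4 statements merged into one kernel-verified Lean document; each statement's English description precedes it below -/
import Mathlib

section
/- For Bernoulli distributions, if 0 ≤ a ≤ 1/2 and 0 ≤ δ ≤ 1/2 (with (1±δ)a ∈ [0,1]), then the Kullback–Leibler divergence KL(Bern(a), Bern((1±δ)a)) is at most 2aδ². -/
open Real Finset in
lemma neg_log_one_sub_le {t : ℝ} (ht0 : 0 ≤ t) (ht : t ≤ 1/2) :
    -Real.log (1 - t) ≤ t + t ^ 2 := by
  have habs : |t| < 1 := by rw [abs_of_nonneg ht0]; linarith
  have h := Real.abs_log_sub_add_sum_range_le habs 4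
  rw [abs_of_nonneg ht0] at h
  simp [Finset.sum_range_succ] at h
  have h' := abs_le.1 h
  have hpos : (0:ℝ) < 1 - t := by linarith
  have hu : (0:ℝ) ≤ 1 - 2*t := by linarith
  have hb : t ^ 5 / (1 - t) ≤ 2 * t ^ 5 := by
    rw [div_le_iff₀ hpos]; nlinarith [mul_nonneg (pow_nonneg ht0 5) hu]
  have h1' : 0 ≤ t * (1 - 2*t) := mul_nonneg ht0 hu
  have h2' : 0 ≤ t^2 * (1 - 2*t) := mul_nonneg (pow_nonneg ht0 2) hu
  have h3' : 0 ≤ t^3 * (1 - 2*t) := mul_nonneg (pow_nonneg ht0 3) hu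
  have h4' : 0 ≤ t^4 * (1 - 2*t) := mul_nonneg (pow_nonneg ht0 4) hu
  nlinarith [h'.2, pow_nonneg ht0 2]

lemma le_log_one_add {t : ℝ} (ht0 : 0 ≤ t) (ht : t ≤ 1/2) :
    t - t ^ 2 / 2 ≤ Real.log (1 + t) := by
  have habs : |(-t)| < 1 := by rw [abs_neg, abs_of_nonneg ht0]; linarith
  have h := Real.abs_log_sub_add_sum_range_le habs 5
  rw [abs_neg, abs_of_nonneg ht0] at h
  simp [Finset.sum_range_succ] at h
  have h' := abs_le.1 h
  have hpos : (0:ℝ) < 1 - t := by linarith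
  have hu : (0:ℝ) ≤ 1 - 2*t := by linarith
  have hb : t ^ 6 / (1 - t) ≤ 2 * t ^ 6 := by
    rw [div_le_iff₀ hpos]; nlinarith [mul_nonneg (pow_nonneg ht0 6) hu]
  have h5 : 0 ≤ t ^ 5 * (1 - 2*t) := mul_nonneg (pow_nonneg ht0 5) hu
  have h4 : 0 ≤ t ^ 4 * (1 - 2*t) := mul_nonneg (pow_nonneg ht0 4) hu
  have h3 : 0 ≤ t ^ 3 * (1 - 2*t) := mul_nonneg (pow_nonneg ht0 3) hu
  nlinarith [h'.1, pow_nonneg ht0 3]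

/-- KL divergence between Bernoulli distributions with parameters `p` and `q`,
`KL(Bern(p), Bern(q)) = p·log(p/q) + (1−p)·log((1−p)/(1−q))`
(with Lean's conventions `0/0 = 0` and `log 0 = 0`, this is `0` when `p = 0` and `q = 0`). -/

noncomputable def klBern (p q : ℝ) : ℝ :=
  p * Real.log (p / q) + (1 - p) * Real.log ((1 - p) / (1 - q))

/-- For `0 ≤ a ≤ 1/2` and `0 ≤ δ ≤ 1/2` (with `(1±δ)a ∈ [0,1]`),
`KL(Bern(a), Bern((1±δ)a)) ≤ 2aδ²`. -/
theorem stmt0 (a δ : ℝ) (ha0 : 0 ≤ a) (ha : a ≤ 1 / 2) (hδ0 : 0 ≤ δ) (hδ : δ ≤ 1 / 2)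
    (h1 : (1 + δ) * a ∈ Set.Icc (0 : ℝ) 1) (h2 : (1 - δ) * a ∈ Set.Icc (0 : ℝ) 1) :
    klBern a ((1 + δ) * a) ≤ 2 * a * δ ^ 2 ∧ klBern a ((1 - δ) * a) ≤ 2 * a * δ ^ 2 := by
  rcases eq_or_lt_of_le ha0 with h | hapos
  · constructor <;> simp [klBern, ← h]
  have h1a : (0:ℝ) < 1 - a := by linarith
  have hane : a ≠ 0 := ne_of_gt hapos
  have hδ1 : (0:ℝ) < 1 + δ := by linarith
  have hδ2 : (0:ℝ) < 1 - δ := by linarith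
  set t := δ * a / (1 - a) with htdef
  have ht0 : 0 ≤ t := by positivity
  have ht : t ≤ δ := by
    rw [htdef, div_le_iff₀ h1a]; nlinarith
  have htle : t ≤ 1/2 := le_trans ht hδ
  have hta : (1 - a) * t = δ * a := by
    rw [htdef]; field_simp
  have hq1 : (0:ℝ) < 1 - (1 + δ) * a := by nlinarith
  have hq2 : (0:ℝ) < 1 - (1 - δ) * a := by nlinarith
  have ht1 : (0:ℝ) < 1 - t := by linarith
  have ht2 : (0:ℝ) < 1 + t := by linarith
  -- log identities
  have e1 : 1 - t = (1 - (1 + δ) * a) / (1 - a) := by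
    rw [htdef]; field_simp; ring
  have e2 : 1 + t = (1 - (1 - δ) * a) / (1 - a) := by
    rw [htdef]; field_simp; ring
  have hl1 : Real.log (a / ((1 + δ) * a)) = -Real.log (1 + δ) := by
    rw [show a / ((1 + δ) * a) = (1 + δ)⁻¹ by field_simp, Real.log_inv]
  have hl1' : Real.log (a / ((1 - δ) * a)) = -Real.log (1 - δ) := by
    rw [show a / ((1 - δ) * a) = (1 - δ)⁻¹ by field_simp, Real.log_inv]
  have hl2 : Real.log ((1 - a) / (1 - (1 + δ) * a)) = -Real.log (1 - t) := by
    rw [show (1 - a) / (1 - (1 + δ) * a) = (1 - t)⁻¹ by rw [e1, inv_div], Real.log_inv]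
  have hl2' : Real.log ((1 - a) / (1 - (1 - δ) * a)) = -Real.log (1 + t) := by
    rw [show (1 - a) / (1 - (1 - δ) * a) = (1 + t)⁻¹ by rw [e2, inv_div], Real.log_inv]
  have A : δ - δ ^ 2 / 2 ≤ Real.log (1 + δ) := le_log_one_add hδ0 hδ
  have A' : -Real.log (1 - δ) ≤ δ + δ ^ 2 := neg_log_one_sub_le hδ0 hδ
  have B : -Real.log (1 - t) ≤ t + t ^ 2 := neg_log_one_sub_le ht0 htle
  have B' : t - t ^ 2 / 2 ≤ Real.log (1 + t) := le_log_one_add ht0 htle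
  have hprod : t * (δ * a) ≤ δ * (δ * a) :=
    mul_le_mul_of_nonneg_right ht (mul_nonneg hδ0 ha0)
  constructor
  · calc klBern a ((1 + δ) * a)
        = a * (-Real.log (1 + δ)) + (1 - a) * (-Real.log (1 - t)) := by
          rw [klBern, hl1, hl2]
      _ ≤ a * (-(δ - δ ^ 2 / 2)) + (1 - a) * (t + t ^ 2) :=
          add_le_add (mul_le_mul_of_nonneg_left (by linarith) ha0)
            (mul_le_mul_of_nonneg_left (by linarith) (le_of_lt h1a))
      _ ≤ 2 * a * δ ^ 2 := by nlinarith [hta, hprod, sq_nonneg δ]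
  · calc klBern a ((1 - δ) * a)
        = a * (-Real.log (1 - δ)) + (1 - a) * (-Real.log (1 + t)) := by
          rw [klBern, hl1', hl2']
      _ ≤ a * (δ + δ ^ 2) + (1 - a) * (-(t - t ^ 2 / 2)) :=
          add_le_add (mul_le_mul_of_nonneg_left (by linarith) ha0)
            (mul_le_mul_of_nonneg_left (by linarith) (le_of_lt h1a))
      _ ≤ 2 * a * δ ^ 2 := by nlinarith [hta, hprod, sq_nonneg δ]
end

section
/- In the independent-values bilateral trade model, the expected Gains from Trade of a fixed-price action (p,q) decomposes as GFT(p,q) = H(p,q) + V(p,q) + Profit(p,q), where H(p,q) = (∫₀ᵖ F_S(x) dx)·(1 − F_B(q)), V(p,q) = F_S(p)·∫_q¹ (1 − F_B(y)) dy, and Profit(p,q) = (q − p)·F_S(p)·(1 − F_B(q)). -/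
open MeasureTheory Set



section Aux
variable {Ω : Type*} [MeasurableSpace Ω] {μ : Measure Ω} [IsProbabilityMeasure μ]

lemma integrable_of_bdd1 {g : Ω → ℝ} (hm : Measurable g) (hb : ∀ ω, ‖g ω‖ ≤ 1) :
    Integrable g μ :=
  (integrable_const (1:ℝ)).mono' hm.aestronglyMeasurable (ae_of_all _ hb)

lemma FS_mono (S : Ω → ℝ) : Monotone fun t => (μ {ω | S ω ≤ t}).toReal := fun a b hab =>
  ENNReal.toReal_mono (measure_ne_top μ _) (measure_mono fun ω (h : S ω ≤ a) => h.trans hab)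

lemma tail_lt (S : Ω → ℝ) (hS : Measurable S) (hS01 : ∀ ω, S ω ∈ Set.Icc (0:ℝ) 1)
    (p : ℝ) (hp : p ∈ Set.Icc (0:ℝ) 1) :
    ∫ ω, S ω * Set.indicator {ω' | S ω' ≤ p} (fun _ => (1:ℝ)) ω ∂μ
      = p * (μ {ω | S ω ≤ p}).toReal - ∫ x in (0:ℝ)..p, (μ {ω | S ω ≤ x}).toReal := by
  set g : Ω → ℝ := fun ω => S ω * Set.indicator {ω' | S ω' ≤ p} (fun _ => (1:ℝ)) ω with hg
  have hgm : Measurable g := hS.mul (measurable_one.indicator (hS measurableSet_Iic))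
  have hgnn : 0 ≤ g := fun ω => mul_nonneg (hS01 ω).1 (Set.indicator_nonneg (fun _ _ => zero_le_one) ω)
  have hgb : ∀ ω, ‖g ω‖ ≤ 1 := by
    intro ω
    rw [Real.norm_eq_abs, abs_of_nonneg (hgnn ω)]
    by_cases h : ω ∈ {ω' | S ω' ≤ p} <;>
      simp [hg, Set.indicator_of_mem, Set.indicator_of_notMem, h, (hS01 ω).2,
        mul_nonneg, (hS01 ω).1]
  have hint : Integrable g μ := integrable_of_bdd1 hgm hgb
  rw [hint.integral_eq_integral_meas_lt (ae_of_all _ hgnn)]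
  have hsets : ∀ t : ℝ, 0 < t → {a | t < g a} = {ω | S ω ≤ p} \ {ω | S ω ≤ t} := by
    intro t ht
    ext ω
    simp only [hg, Set.mem_setOf_eq, Set.mem_diff, Set.indicator_apply, Set.mem_setOf_eq, not_le]
    by_cases h : S ω ≤ p <;> simp [h, ht.asymm]
  have key : ∀ᵐ t ∂(volume.restrict (Set.Ioi (0:ℝ))),
      (μ {a | t < g a}).toReal
        = (Set.Ioc (0:ℝ) p).indicator
            (fun t => (μ {ω | S ω ≤ p}).toReal - (μ {ω | S ω ≤ t}).toReal) t := by
    filter_upwards [ae_restrict_mem measurableSet_Ioi] with t ht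
    rw [hsets t ht]
    by_cases htp : t ≤ p
    · rw [Set.indicator_of_mem (Set.mem_Ioc.mpr ⟨ht, htp⟩)]
      have hsub : {ω | S ω ≤ t} ⊆ {ω | S ω ≤ p} := fun ω h => le_trans h htp
      rw [measure_diff hsub (hS measurableSet_Iic).nullMeasurableSet (measure_ne_top μ _)]
      exact ENNReal.toReal_sub_of_le (measure_mono hsub) (measure_ne_top μ _)
    · rw [Set.indicator_of_notMem (fun h => htp h.2)]
      have : {ω | S ω ≤ p} \ {ω | S ω ≤ t} = ∅ := by
        ext ω; simp only [Set.mem_diff, Set.mem_setOf_eq, Set.mem_empty_iff_false, iff_false, not_and, not_not]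
        exact fun h => h.trans (le_of_not_ge htp)
      simp [this]
  rw [integral_congr_ae (f := fun t => μ.real {a | t < g a}) key, integral_indicator measurableSet_Ioc,
      Measure.restrict_restrict measurableSet_Ioc]
  have : Set.Ioc (0:ℝ) p ∩ Set.Ioi 0 = Set.Ioc 0 p := by
    rw [Set.inter_eq_left]; exact Set.Ioc_subset_Ioi_self
  rw [this, ← intervalIntegral.integral_of_le hp.1]
  have hmono : Monotone fun t => (μ {ω | S ω ≤ t}).toReal := FS_mono S
  have hii : IntervalIntegrable (fun t => (μ {ω | S ω ≤ t}).toReal) volume 0 p :=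
    (hmono.monotoneOn _).intervalIntegrable
  rw [intervalIntegral.integral_sub intervalIntegrable_const hii]
  simp [mul_comm]
variable {Ω : Type*} [MeasurableSpace Ω] {μ : Measure Ω} [IsProbabilityMeasure μ]

lemma FB_anti (B : Ω → ℝ) : Antitone fun t => μ {ω | t ≤ B ω} := fun a b hab =>
  measure_mono fun ω (h : b ≤ B ω) => hab.trans h

lemma tail_le (B : Ω → ℝ) (hB : Measurable B) (hB01 : ∀ ω, B ω ∈ Set.Icc (0:ℝ) 1)
    (q : ℝ) (hq : q ∈ Set.Icc (0:ℝ) 1) :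
    ∫ ω, B ω * Set.indicator {ω' | q ≤ B ω'} (fun _ => (1:ℝ)) ω ∂μ
      = q * (μ {ω | q ≤ B ω}).toReal + ∫ y in q..(1:ℝ), (μ {ω | y ≤ B ω}).toReal := by
  set g : Ω → ℝ := fun ω => B ω * Set.indicator {ω' | q ≤ B ω'} (fun _ => (1:ℝ)) ω with hg
  have hgm : Measurable g := hB.mul (measurable_one.indicator (measurableSet_le measurable_const hB))
  have hgnn : 0 ≤ g := fun ω => mul_nonneg (hB01 ω).1 (Set.indicator_nonneg (fun _ _ => zero_le_one) ω)
  rw [integral_eq_lintegral_of_nonneg_ae (ae_of_all _ hgnn) hgm.aestronglyMeasurable]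
  rw [lintegral_eq_lintegral_meas_le μ (ae_of_all _ hgnn) hgm.aemeasurable]
  have hsets : ∀ t : ℝ, 0 < t → {a | t ≤ g a} = {ω | max q t ≤ B ω} := by
    intro t ht
    ext ω
    simp only [hg, Set.mem_setOf_eq, Set.indicator_apply, Set.mem_setOf_eq, max_le_iff]
    by_cases h : q ≤ B ω <;> simp [h, ht.not_ge, and_comm]
  -- split Ioi 0 = Ioc 0 q ∪ Ioc q 1 ∪ Ioi 1
  have h01 : Set.Ioc (0:ℝ) q ∪ Set.Ioc q 1 = Set.Ioc 0 1 := Set.Ioc_union_Ioc_eq_Ioc hq.1 hq.2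
  have hsplit : Set.Ioi (0:ℝ) = (Set.Ioc 0 q ∪ Set.Ioc q 1) ∪ Set.Ioi 1 := by
    rw [h01, Set.Ioc_union_Ioi_eq_Ioi zero_le_one]
  rw [hsplit, lintegral_union measurableSet_Ioi (by
        rw [h01]; exact Set.Ioc_disjoint_Ioi le_rfl),
      lintegral_union measurableSet_Ioc (Set.Ioc_disjoint_Ioc_of_le le_rfl)]
  have e1 : ∫⁻ t in Set.Ioc (0:ℝ) q, μ {a | t ≤ g a} = μ {ω | q ≤ B ω} * ENNReal.ofReal q := by
    rw [setLIntegral_congr_fun measurableSet_Ioc (fun t ht => ?_),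
        setLIntegral_const, Real.volume_Ioc, sub_zero]
    rw [hsets t ht.1, max_eq_left ht.2]
  have e2 : ∫⁻ t in Set.Ioc q (1:ℝ), μ {a | t ≤ g a} = ∫⁻ t in Set.Ioc q 1, μ {ω | t ≤ B ω} := by
    refine setLIntegral_congr_fun measurableSet_Ioc (fun t ht => ?_)
    rw [hsets t (hq.1.trans_lt ht.1), max_eq_right ht.1.le]
  have e3 : ∫⁻ t in Set.Ioi (1:ℝ), μ {a | t ≤ g a} = 0 := by
    have hz : ∀ t ∈ Set.Ioi (1:ℝ), μ {a | t ≤ g a} = (fun _ : ℝ => (0:ENNReal)) t := by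
      intro t ht
      rw [hsets t (lt_trans one_pos ht)]
      have he : {ω | max q t ≤ B ω} = ∅ := by
        ext ω
        simp only [Set.mem_setOf_eq, Set.mem_empty_iff_false, iff_false, not_le]
        exact lt_max_of_lt_right (lt_of_le_of_lt (hB01 ω).2 ht)
      rw [he, measure_empty]
    rw [setLIntegral_congr_fun measurableSet_Ioi hz, lintegral_zero]
  rw [e1, e2, e3, add_zero]
  have hanti : Antitone fun t => μ {ω | t ≤ B ω} := FB_anti B
  have hfin : ∫⁻ t in Set.Ioc q (1:ℝ), μ {ω | t ≤ B ω} ≠ ⊤ := by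
    refine ne_top_of_le_ne_top ?_ (lintegral_mono (fun t => prob_le_one))
    simp [lt_top_iff_ne_top]
  rw [ENNReal.toReal_add (by finiteness) hfin, ENNReal.toReal_mul, ENNReal.toReal_ofReal hq.1,
      mul_comm]
  congr 1
  rw [intervalIntegral.integral_of_le hq.2, ← integral_toReal (hanti.measurable.aemeasurable)
    (ae_of_all _ (fun t => measure_lt_top μ _))]

end Aux

/-- Independent values: the expected Gains from Trade of a fixed-price action `(p,q)`
decomposes as `GFT(p,q) = H(p,q) + V(p,q) + Profit(p,q)`, where
`H(p,q) = (∫₀ᵖ F_S) · (1 − F_B(q))`, `V(p,q) = F_S(p) · ∫_q¹ (1 − F_B)`,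
`Profit(p,q) = (q − p) · F_S(p) · (1 − F_B(q))`,
with `F_S(x) = P[S ≤ x]` and `F_B(y) = P[B < y]`. -/
theorem stmt1 {Ω : Type*} [MeasurableSpace Ω] (μ : Measure Ω) [IsProbabilityMeasure μ]
    (S B : Ω → ℝ) (hS : Measurable S) (hB : Measurable B)
    (hS01 : ∀ ω, S ω ∈ Set.Icc (0 : ℝ) 1) (hB01 : ∀ ω, B ω ∈ Set.Icc (0 : ℝ) 1)
    (hind : ProbabilityTheory.IndepFun S B μ)
    (p q : ℝ) (hp : p ∈ Set.Icc (0 : ℝ) 1) (hq : q ∈ Set.Icc (0 : ℝ) 1) :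
    ∫ ω, (B ω - S ω) * Set.indicator {ω' | S ω' ≤ p ∧ q ≤ B ω'} (fun _ => (1 : ℝ)) ω ∂μ
      = (∫ x in (0 : ℝ)..p, (μ {ω | S ω ≤ x}).toReal) * (1 - (μ {ω | B ω < q}).toReal)
        + (μ {ω | S ω ≤ p}).toReal * (∫ y in q..(1 : ℝ), (1 - (μ {ω | B ω < y}).toReal))
        + (q - p) * (μ {ω | S ω ≤ p}).toReal * (1 - (μ {ω | B ω < q}).toReal) := by
  have hAm : MeasurableSet {ω | S ω ≤ p} := hS measurableSet_Iic
  have hCm : MeasurableSet {ω | q ≤ B ω} := measurableSet_le measurable_const hB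
  set indA : Ω → ℝ := Set.indicator {ω' | S ω' ≤ p} (fun _ => 1) with hindA
  set indC : Ω → ℝ := Set.indicator {ω' | q ≤ B ω'} (fun _ => 1) with hindC
  have hmA : Measurable indA := measurable_one.indicator hAm
  have hmC : Measurable indC := measurable_one.indicator hCm
  -- pointwise rewriting of the integrand
  have hpt : ∀ ω, (B ω - S ω) * Set.indicator {ω' | S ω' ≤ p ∧ q ≤ B ω'} (fun _ => (1 : ℝ)) ω
      = (B ω * indC ω) * indA ω - (S ω * indA ω) * indC ω := by
    intro ω
    by_cases h1 : S ω ≤ p <;> by_cases h2 : q ≤ B ω <;>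
      simp [hindA, hindC, Set.indicator_apply, h1, h2] <;> ring
  rw [integral_congr_ae (ae_of_all _ hpt)]
  -- integrability
  have hb1 : ∀ ω, ‖(B ω * indC ω) * indA ω‖ ≤ 1 := by
    intro ω
    by_cases h1 : ω ∈ {ω' | S ω' ≤ p} <;> by_cases h2 : ω ∈ {ω' | q ≤ B ω'} <;>
      simp [hindA, hindC, Set.indicator_of_mem, Set.indicator_of_notMem, h1, h2,
        abs_of_nonneg (hB01 ω).1, (hB01 ω).2]
  have hb2 : ∀ ω, ‖(S ω * indA ω) * indC ω‖ ≤ 1 := by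
    intro ω
    by_cases h1 : ω ∈ {ω' | S ω' ≤ p} <;> by_cases h2 : ω ∈ {ω' | q ≤ B ω'} <;>
      simp [hindA, hindC, Set.indicator_of_mem, Set.indicator_of_notMem, h1, h2,
        abs_of_nonneg (hS01 ω).1, (hS01 ω).2]
  have hi1 : Integrable (fun ω => (B ω * indC ω) * indA ω) μ :=
    integrable_of_bdd1 ((hB.mul hmC).mul hmA) hb1
  have hi2 : Integrable (fun ω => (S ω * indA ω) * indC ω) μ :=
    integrable_of_bdd1 ((hS.mul hmA).mul hmC) hb2
  rw [integral_sub hi1 hi2]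
  -- independence splits
  have hφ : Measurable fun b : ℝ => b * Set.indicator (Set.Ici q) (fun _ => (1:ℝ)) b :=
    measurable_id.mul (measurable_one.indicator measurableSet_Ici)
  have hψ : Measurable fun s : ℝ => Set.indicator (Set.Iic p) (fun _ => (1:ℝ)) s :=
    measurable_one.indicator measurableSet_Iic
  have hψ' : Measurable fun s : ℝ => s * Set.indicator (Set.Iic p) (fun _ => (1:ℝ)) s :=
    measurable_id.mul hψ
  have hφ' : Measurable fun b : ℝ => Set.indicator (Set.Ici q) (fun _ => (1:ℝ)) b :=
    measurable_one.indicator measurableSet_Ici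
  have hind1 : ProbabilityTheory.IndepFun (fun ω => B ω * indC ω) indA μ := by
    have h := (hind.symm.comp hφ hψ)
    convert h using 1
    all_goals (ext ω; simp [hindA, hindC, Set.indicator_apply])
  have hind2 : ProbabilityTheory.IndepFun (fun ω => S ω * indA ω) indC μ := by
    have h := (hind.comp hψ' hφ')
    convert h using 1
    all_goals (ext ω; simp [hindA, hindC, Set.indicator_apply])
  have e1 : ∫ ω, B ω * indC ω * indA ω ∂μ = (∫ ω, B ω * indC ω ∂μ) * ∫ ω, indA ω ∂μ :=
    hind1.integral_fun_mul_eq_mul_integral ((hB.mul hmC).aestronglyMeasurable) hmA.aestronglyMeasurable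
  have e2 : ∫ ω, S ω * indA ω * indC ω ∂μ = (∫ ω, S ω * indA ω ∂μ) * ∫ ω, indC ω ∂μ :=
    hind2.integral_fun_mul_eq_mul_integral ((hS.mul hmA).aestronglyMeasurable) hmC.aestronglyMeasurable
  rw [e1, e2]
  -- evaluate pieces
  have eA : ∫ ω, indA ω ∂μ = (μ {ω | S ω ≤ p}).toReal := by
    rw [hindA, integral_indicator_const (1:ℝ) hAm, smul_eq_mul, mul_one, measureReal_def]
  have eC : ∫ ω, indC ω ∂μ = (μ {ω | q ≤ B ω}).toReal := by
    rw [hindC, integral_indicator_const (1:ℝ) hCm, smul_eq_mul, mul_one, measureReal_def]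
  have hcompl : ∀ y : ℝ, (μ {ω | y ≤ B ω}).toReal = 1 - (μ {ω | B ω < y}).toReal := by
    intro y
    have hset : {ω | B ω < y} = {ω | y ≤ B ω}ᶜ := by ext ω; simp [not_le]
    have hm : MeasurableSet {ω | y ≤ B ω} := measurableSet_le measurable_const hB
    rw [hset, measure_compl hm (measure_ne_top μ _), measure_univ,
        ENNReal.toReal_sub_of_le prob_le_one ENNReal.one_ne_top, ENNReal.toReal_one]
    ring
  have eB := tail_le (μ := μ) B hB hB01 q hq
  have eS := tail_lt (μ := μ) S hS hS01 p hp
  rw [eA, eC, eB, eS, hcompl q]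
  have : (∫ y in q..(1:ℝ), (μ {ω | y ≤ B ω}).toReal)
      = ∫ y in q..(1:ℝ), (1 - (μ {ω | B ω < y}).toReal) :=
    intervalIntegral.integral_congr fun y _ => hcompl y
  rw [this]
  ring
end

section
/- In the correlated-values lower-bound construction, a mechanism restricted to the grid A that satisfies Global Budget Balance in expectation must satisfy Global Price Balance: E[Σ_{t=1}^{T} (Q_t − P_t)] ≥ 0. Formally: suppose there exists α > 0 such that for every action (p,q) ∈ A, if p ≤ q then the trade success probability is at most α, and if p > q then it is at least α. If E[Σ_t (Q_t − P_t)·1[trade succeeds at t]] ≥ 0, then E[Σ_t (Q_t − P_t)] ≥ 0. -/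
open MeasureTheory

/-- Global Budget Balance (in expectation) implies Global Price Balance: if there is `α > 0`
such that for every action `(p,q) ∈ A` the conditional trade-success probability
`π(p,q)` satisfies `π(p,q) ≤ α` when `p ≤ q` and `π(p,q) ≥ α` when `p > q`, and
`E[Σ_t (Q_t − P_t)·1[trade succeeds at t]] ≥ 0`, then `E[Σ_t (Q_t − P_t)] ≥ 0`. -/
theorem stmt12 {Ω : Type*} [MeasurableSpace Ω] (μ : Measure Ω) [IsProbabilityMeasure μ]
    (T : ℕ) (P Q : Fin T → Ω → ℝ)
    (hPm : ∀ t, Measurable (P t)) (hQm : ∀ t, Measurable (Q t))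
    (hP01 : ∀ t ω, P t ω ∈ Set.Icc (0 : ℝ) 1) (hQ01 : ∀ t ω, Q t ω ∈ Set.Icc (0 : ℝ) 1)
    (A : Set (ℝ × ℝ)) (hA : ∀ t ω, (P t ω, Q t ω) ∈ A)
    (Succ : Fin T → Set Ω) (hSucc : ∀ t, MeasurableSet (Succ t))
    (π : ℝ × ℝ → ℝ) (α : ℝ) (hα : 0 < α)
    (hπle : ∀ pq ∈ A, pq.1 ≤ pq.2 → π pq ≤ α)
    (hπge : ∀ pq ∈ A, pq.2 < pq.1 → α ≤ π pq)
    (hcond : ∀ t, μ[Set.indicator (Succ t) (fun _ => (1 : ℝ)) |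
          MeasurableSpace.comap (fun ω => (P t ω, Q t ω)) inferInstance]
        =ᵐ[μ] fun ω => π (P t ω, Q t ω))
    (hGBB : 0 ≤ ∫ ω, ∑ t : Fin T,
        (Q t ω - P t ω) * Set.indicator (Succ t) (fun _ => (1 : ℝ)) ω ∂μ) :
    0 ≤ ∫ ω, ∑ t : Fin T, (Q t ω - P t ω) ∂μ := by
  -- notation
  set f : Fin T → Ω → ℝ := fun t ω => Q t ω - P t ω with hf
  set g : Fin T → Ω → ℝ := fun t => Set.indicator (Succ t) (fun _ => (1 : ℝ)) with hg
  have hfb : ∀ t ω, |f t ω| ≤ 1 := by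
    intro t ω
    have h1 := hP01 t ω; have h2 := hQ01 t ω
    rw [abs_le]; constructor <;> simp only [hf] <;> nlinarith [h1.1, h1.2, h2.1, h2.2]
  have hgb : ∀ t ω, |g t ω| ≤ 1 := by
    intro t ω
    simp only [hg, Set.indicator]
    split <;> simp
  have hfm : ∀ t, Measurable (f t) := fun t => (hQm t).sub (hPm t)
  have hfint : ∀ t, Integrable (f t) μ := by
    intro t
    refine Integrable.mono' (integrable_const (1:ℝ)) (hfm t).aestronglyMeasurable ?_
    exact Filter.Eventually.of_forall fun ω => by simpa using hfb t ω
  have hgm : ∀ t, Measurable (g t) := fun t =>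
    (measurable_const.indicator (hSucc t))
  have hgint : ∀ t, Integrable (g t) μ := by
    intro t
    refine Integrable.mono' (integrable_const (1:ℝ)) (hgm t).aestronglyMeasurable ?_
    exact Filter.Eventually.of_forall fun ω => by simpa using hgb t ω
  have hfgint : ∀ t, Integrable (f t * g t) μ := by
    intro t
    refine Integrable.mono' (integrable_const (1:ℝ)) ((hfm t).mul (hgm t)).aestronglyMeasurable ?_
    refine Filter.Eventually.of_forall fun ω => ?_
    simp only [Pi.mul_apply, Real.norm_eq_abs, abs_mul]
    calc |f t ω| * |g t ω| ≤ 1 * 1 := by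
          exact mul_le_mul (hfb t ω) (hgb t ω) (abs_nonneg _) zero_le_one
      _ = 1 := by ring
  -- the key per-t bound
  have key : ∀ t, ∫ ω, f t ω * g t ω ∂μ ≤ α * ∫ ω, f t ω ∂μ := by
    intro t
    have hm : MeasurableSpace.comap (fun ω => (P t ω, Q t ω)) inferInstance ≤
        ‹MeasurableSpace Ω› := ((hPm t).prodMk (hQm t)).comap_le
    set m : MeasurableSpace Ω :=
      MeasurableSpace.comap (fun ω => (P t ω, Q t ω)) inferInstance with hm' 
    haveI : SigmaFinite (μ.trim hm) := by
      have : IsFiniteMeasure (μ.trim hm) := isFiniteMeasure_trim hm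
      exact this.toSigmaFinite
    have hfsm : StronglyMeasurable[m] (f t) := by
      have : Measurable[m] (f t) := by
        have hmap : Measurable[m] (fun ω => (P t ω, Q t ω)) :=
          Measurable.of_comap_le le_rfl
        exact (measurable_snd.sub measurable_fst).comp hmap
      exact this.stronglyMeasurable
    have hpull := condExp_mul_of_stronglyMeasurable_left (μ := μ) (m := m) hfsm (hfgint t) (hgint t)
    have h1 : ∫ ω, f t ω * g t ω ∂μ = ∫ ω, f t ω * π (P t ω, Q t ω) ∂μ := by
      have e1 : ∫ ω, f t ω * g t ω ∂μ = ∫ ω, (f t * g t) ω ∂μ := rfl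
      rw [e1, ← integral_condExp (μ := μ) (f := f t * g t) hm]
      refine integral_congr_ae (hpull.trans ?_)
      filter_upwards [hcond t] with ω hω
      simp [hω]
      exact Or.inl hω
    rw [h1, ← integral_const_mul]
    have hαint : Integrable (fun ω => α * f t ω) μ := (hfint t).const_mul α
    have heq : (fun ω => f t ω * π (P t ω, Q t ω)) =ᵐ[μ] μ[f t * g t | m] := by
      refine Filter.EventuallyEq.symm (hpull.trans ?_)
      filter_upwards [hcond t] with ω hω
      simp [hω]
      exact Or.inl hω
    have hfπint : Integrable (fun ω => f t ω * π (P t ω, Q t ω)) μ :=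
      integrable_condExp.congr heq.symm
    refine integral_mono hfπint hαint fun ω => ?_
    have hmem := hA t ω
    rcases le_or_gt (P t ω) (Q t ω) with h | h
    · have hπ := hπle _ hmem h
      have hf0 : 0 ≤ f t ω := by simp [hf]; linarith
      nlinarith
    · have hπ := hπge _ hmem h
      have hf0 : f t ω ≤ 0 := by simp [hf]; linarith
      nlinarith
  -- assemble
  have hsum1 : ∫ ω, ∑ t : Fin T, f t ω * g t ω ∂μ = ∑ t : Fin T, ∫ ω, f t ω * g t ω ∂μ :=
    integral_finset_sum _ fun t _ => hfgint t
  have hsum2 : ∫ ω, ∑ t : Fin T, f t ω ∂μ = ∑ t : Fin T, ∫ ω, f t ω ∂μ :=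
    integral_finset_sum _ fun t _ => hfint t
  have hGBB' : 0 ≤ α * ∫ ω, ∑ t : Fin T, f t ω ∂μ := by
    calc (0:ℝ) ≤ ∫ ω, ∑ t : Fin T, f t ω * g t ω ∂μ := hGBB
      _ ≤ α * ∫ ω, ∑ t : Fin T, f t ω ∂μ := by
          rw [hsum1, hsum2, Finset.mul_sum]
          exact Finset.sum_le_sum fun t _ => key t
  nlinarith
end

section
/- Discretization preserves trade outcomes in the correlated support: let V be the discrete support consisting of points of the form (k/(5K), 0.4 + k/(5K)) for k ∈ [0:3K], (0.2 + k/(5K), 0.4 + k/(5K)) for k ∈ [0:2K], the corners {0,1}², and (0.4, 0.6). For any price pair (p̄, q̄) ∈ [0,1]², define the rounded pair (p, q) = (min(⌊p̄·5K⌋/(5K), 0.6), min(⌈q̄·5K⌉/(5K), 0.4)). Then for every value pair (s, b) ∈ V with s < b, the trade outcome is preserved: 1[s ≤ p ∧ q ≤ b] = 1[s ≤ p̄ ∧ q̄ ≤ b]; and for (s,b) ∈ V with s ≥ b (i.e., (s,b) ∈ {(0,0), (1,0), (1,1)}), the discretized trade can only weakly improve GFT and profit, since b − s ≤ 0 and q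 − p ≥ q̄ − p̄ fails only on nonpositive-GFT trades. -/
open scoped Classical

/-- The discrete value support `V` of the correlated-values lower-bound construction:
upper-left points `(k/(5K), 0.4 + k/(5K))` for `k ∈ [0:3K]`, lower-right points
`(0.2 + k/(5K), 0.4 + k/(5K))` for `k ∈ [0:2K]`, the corners `{0,1}²`, and `(0.4, 0.6)`. -/
def Vsupp (K : ℕ) : Set (ℝ × ℝ) :=
  {v | (∃ k : ℕ, k ≤ 3 * K ∧ v = ((k : ℝ) / (5 * K), 0.4 + (k : ℝ) / (5 * K)))
    ∨ (∃ k : ℕ, k ≤ 2 * K ∧ v = (0.2 + (k : ℝ) / (5 * K), 0.4 + (k : ℝ) / (5 * K)))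
    ∨ ((v.1 = 0 ∨ v.1 = 1) ∧ (v.2 = 0 ∨ v.2 = 1))
    ∨ v = (0.4, 0.6)}

/-- The discretized seller price: `p̄` rounded down to the grid, capped at `0.6`. -/
noncomputable def roundP (K : ℕ) (p : ℝ) : ℝ :=
  min ((⌊p * (5 * (K : ℝ))⌋ : ℝ) / (5 * K)) 0.6

/-- The discretized buyer price: `q̄` rounded up to the grid, floored at `0.4`. -/
noncomputable def roundQ (K : ℕ) (q : ℝ) : ℝ :=
  max ((⌈q * (5 * (K : ℝ))⌉ : ℝ) / (5 * K)) 0.4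

/-- Discretization preserves trade outcomes on the support `V`: for values `(s,b) ∈ V` with
`s < b` the trade outcome is unchanged, `1[s ≤ p ∧ q ≤ b] = 1[s ≤ p̄ ∧ q̄ ≤ b]`; and in all
cases (including `(s,b) ∈ {(0,0),(1,0),(1,1)}` where `b − s ≤ 0`) the Gains from Trade
`(b − s)·1[trade]` and the profit `(q − p)·1[trade]` can only weakly increase. -/
theorem stmt17 (K : ℕ) (hK : 1 ≤ K) (pbar qbar : ℝ)
    (hp : pbar ∈ Set.Icc (0 : ℝ) 1) (hq : qbar ∈ Set.Icc (0 : ℝ) 1) :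
    ∀ s b : ℝ, (s, b) ∈ Vsupp K →
      (s < b →
        ((s ≤ roundP K pbar ∧ roundQ K qbar ≤ b) ↔ (s ≤ pbar ∧ qbar ≤ b)))
      ∧ (b - s) * (if s ≤ pbar ∧ qbar ≤ b then (1 : ℝ) else 0)
          ≤ (b - s) * (if s ≤ roundP K pbar ∧ roundQ K qbar ≤ b then (1 : ℝ) else 0)
      ∧ (qbar - pbar) * (if s ≤ pbar ∧ qbar ≤ b then (1 : ℝ) else 0)
          ≤ (roundQ K qbar - roundP K pbar) *
              (if s ≤ roundP K pbar ∧ roundQ K qbar ≤ b then (1 : ℝ) else 0) := by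

  have hKR : (1:ℝ) ≤ (K:ℝ) := by exact_mod_cast hK
  have hN : (0:ℝ) < 5 * K := by linarith
  have hNne : (5 * (K:ℝ)) ≠ 0 := ne_of_gt hN
  -- roundP ≤ pbar
  have hPle : roundP K pbar ≤ pbar := by
    calc roundP K pbar ≤ (⌊pbar * (5 * (K:ℝ))⌋ : ℝ) / (5 * K) := min_le_left _ _
      _ ≤ (pbar * (5 * K)) / (5 * K) := by gcongr; exact Int.floor_le _
      _ = pbar := by field_simp
  -- qbar ≤ roundQ
  have hQge : qbar ≤ roundQ K qbar := by
    have : qbar ≤ (⌈qbar * (5 * (K:ℝ))⌉ : ℝ) / (5 * K) := by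
      rw [le_div_iff₀ hN]
      exact Int.le_ceil _
    exact this.trans (le_max_left _ _)
  -- grid lemmas
  have keyP : ∀ s : ℝ, s ≤ 0.6 → (∃ m : ℤ, s * (5 * K) = m) →
      ((s ≤ pbar) ↔ (s ≤ roundP K pbar)) := by
    intro s hs6 ⟨m, hm⟩
    constructor
    · intro hsp
      have h1 : (m:ℝ) ≤ pbar * (5 * K) := by
        rw [← hm]; exact mul_le_mul_of_nonneg_right hsp (le_of_lt hN)
      have h2 : m ≤ ⌊pbar * (5 * (K:ℝ))⌋ := Int.le_floor.2 h1
      have h3 : s ≤ (⌊pbar * (5 * (K:ℝ))⌋ : ℝ) / (5 * K) := by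
        rw [le_div_iff₀ hN, hm]
        exact_mod_cast h2
      exact le_min h3 hs6
    · intro h; exact h.trans hPle
  have keyQ : ∀ b : ℝ, 0.4 ≤ b → (∃ m : ℤ, b * (5 * K) = m) →
      ((qbar ≤ b) ↔ (roundQ K qbar ≤ b)) := by
    intro b hb4 ⟨m, hm⟩
    constructor
    · intro hqb
      have h1 : qbar * (5 * K) ≤ (m:ℝ) := by
        rw [← hm]; exact mul_le_mul_of_nonneg_right hqb (le_of_lt hN)
      have h2 : ⌈qbar * (5 * (K:ℝ))⌉ ≤ m := Int.ceil_le.2 h1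
      have h3 : (⌈qbar * (5 * (K:ℝ))⌉ : ℝ) / (5 * K) ≤ b := by
        rw [div_le_iff₀ hN, hm]
        exact_mod_cast h2
      exact max_le h3 hb4
    · intro h; exact hQge.trans h
  intro s b hv
  have hNewOld : (s ≤ roundP K pbar ∧ roundQ K qbar ≤ b) → (s ≤ pbar ∧ qbar ≤ b) :=
    fun ⟨h1, h2⟩ => ⟨h1.trans hPle, hQge.trans h2⟩
  have hmain : (b ≤ s) ∨
      ((s ≤ pbar ↔ s ≤ roundP K pbar) ∧ (qbar ≤ b ↔ roundQ K qbar ≤ b)) := by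
    rcases hv with ⟨k, hk, hv⟩ | ⟨k, hk, hv⟩ | ⟨hs, hb⟩ | hv
    · right
      have hkR : (k:ℝ) ≤ 3 * K := by exact_mod_cast hk
      have hs : s = (k:ℝ) / (5 * K) := congrArg Prod.fst hv
      have hb : b = 0.4 + (k:ℝ) / (5 * K) := congrArg Prod.snd hv
      constructor
      · apply keyP
        · rw [hs, div_le_iff₀ hN]; linarith
        · exact ⟨(k:ℤ), by rw [hs]; field_simp; norm_cast⟩
      · apply keyQ
        · have : (0:ℝ) ≤ (k:ℝ) / (5 * K) := by positivity
          rw [hb]; linarith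
        · exact ⟨(2 * K + k : ℤ), by rw [hb]; push_cast; field_simp; ring⟩
    · right
      have hkR : (k:ℝ) ≤ 2 * K := by exact_mod_cast hk
      have hs : s = 0.2 + (k:ℝ) / (5 * K) := congrArg Prod.fst hv
      have hb : b = 0.4 + (k:ℝ) / (5 * K) := congrArg Prod.snd hv
      constructor
      · apply keyP
        · rw [hs]
          have : (k:ℝ) / (5 * K) ≤ 0.4 := by rw [div_le_iff₀ hN]; linarith
          linarith
        · exact ⟨(K + k : ℤ), by rw [hs]; push_cast; field_simp; ring⟩
      · apply keyQ
        · have : (0:ℝ) ≤ (k:ℝ) / (5 * K) := by positivity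
          rw [hb]; linarith
        · exact ⟨(2 * K + k : ℤ), by rw [hb]; push_cast; field_simp; ring⟩
    · simp only [] at hs hb
      rcases hs with hs | hs <;> rcases hb with hb | hb
      · left; rw [hs, hb]
      · right
        constructor
        · apply keyP
          · rw [hs]; norm_num
          · exact ⟨0, by rw [hs]; simp⟩
        · apply keyQ
          · rw [hb]; norm_num
          · exact ⟨(5 * K : ℤ), by rw [hb]; push_cast; ring⟩
      · left; rw [hs, hb]; linarith
      · left; rw [hs, hb]
    · right
      have hs : s = 0.4 := congrArg Prod.fst hv
      have hb : b = 0.6 := congrArg Prod.snd hv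
      constructor
      · apply keyP
        · rw [hs]; norm_num
        · exact ⟨(2 * K : ℤ), by rw [hs]; push_cast; ring⟩
      · apply keyQ
        · rw [hb]; norm_num
        · exact ⟨(3 * K : ℤ), by rw [hb]; push_cast; ring⟩
  rcases hmain with hbs | ⟨hsiff, hbiff⟩
  · refine ⟨fun hsb => absurd hsb (not_lt.2 hbs), ?_, ?_⟩
    · by_cases hnew : s ≤ roundP K pbar ∧ roundQ K qbar ≤ b
      · rw [if_pos hnew, if_pos (hNewOld hnew)]
      · rw [if_neg hnew, mul_zero]
        by_cases hold : s ≤ pbar ∧ qbar ≤ b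
        · rw [if_pos hold, mul_one]; linarith
        · rw [if_neg hold, mul_zero]
    · by_cases hnew : s ≤ roundP K pbar ∧ roundQ K qbar ≤ b
      · rw [if_pos hnew, if_pos (hNewOld hnew), mul_one, mul_one]
        linarith
      · rw [if_neg hnew, mul_zero]
        by_cases hold : s ≤ pbar ∧ qbar ≤ b
        · rw [if_pos hold, mul_one]
          obtain ⟨h1, h2⟩ := hold
          linarith
        · rw [if_neg hold, mul_zero]
  · have hcond : (s ≤ pbar ∧ qbar ≤ b) ↔ (s ≤ roundP K pbar ∧ roundQ K qbar ≤ b) :=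
      and_congr hsiff hbiff
    have hif : (if s ≤ pbar ∧ qbar ≤ b then (1:ℝ) else 0)
        = (if s ≤ roundP K pbar ∧ roundQ K qbar ≤ b then (1:ℝ) else 0) :=
      if_congr hcond rfl rfl
    refine ⟨fun _ => hcond.symm, by rw [hif], ?_⟩
    rw [hif]
    by_cases hnew : s ≤ roundP K pbar ∧ roundQ K qbar ≤ b
    · rw [if_pos hnew, mul_one, mul_one]; linarith
    · rw [if_neg hnew, mul_zero, mul_zero]
end
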